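/- Let W = A ≀_X B be a permutational wreath product where A acts transitively on the finite set X and B is abelian. An element (a; (h_x)_{x∈X}) of W lies in the commutator subgroup W' if and only if a ∈ A' and the product of all coordinates ∏_{x∈X} h_x equals the identity of B. -/

import Mathlib

def permAut {X : Type*} (B : Type*) [Group B] (e : Equiv.Perm X) : MulAut (X → B) :=
  MulEquiv.arrowCongr e (MulEquiv.refl B)

def wreathMul {A X : Type*} [Group A] (ρ : A →* Equiv.Perm X) (B : Type*) [Group B] :
    A →* MulAut (X → B) where
  toFun a := permAut B (ρ a)
  map_one' := by
    ext f x
    simp [permAut] <;> rfl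
  map_mul' := by
    intro a b
    ext f x
    simp [permAut, MulEquiv.arrowCongr, map_mul]
    rfl

noncomputable def mingen (G : Type*) [Group G] : ℕ :=
  sInf {k | ∃ S : Finset G, S.card = k ∧ Subgroup.closure (S : Set G) = ⊤}

lemma mem_comm_map {G H : Type*} [Group G] [Group H] (f : G →* H) {g : G}
    (hg : g ∈ commutator G) : f g ∈ commutator H := by
  have h : (commutator G).map f ≤ commutator H := by
    rw [commutator_def, Subgroup.map_commutator]
    exact Subgroup.commutator_mono le_top le_top
  exact h ⟨g, hg, rfl⟩

lemma wreathMul_apply {A X B : Type*} [Group A] [Group B] (ρ : A →* Equiv.Perm X)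
    (a : A) (f : X → B) (x : X) : (wreathMul ρ B a) f x = f ((ρ a).symm x) := rfl

/-- the product-of-coordinates homomorphism `W →* B`. -/
def prodHom {A X B : Type*} [Group A] [CommGroup B] [Fintype X] (ρ : A →* Equiv.Perm X) :
    ((X → B) ⋊[wreathMul ρ B] A) →* B where
  toFun w := ∏ x, w.left x
  map_one' := by simp
  map_mul' u v := by
    simp only [SemidirectProduct.mul_left, Pi.mul_apply, Finset.prod_mul_distrib,
      wreathMul_apply]
    congr 1
    exact Equiv.prod_comp (ρ u.right).symm v.left

open scoped commutatorElement in
lemma aut_mem_comm {A X B : Type*} [Group A] [Group B] (ρ : A →* Equiv.Perm X)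
    (a : A) (n : X → B) :
    SemidirectProduct.inl ((wreathMul ρ B a) n * n⁻¹) ∈
      commutator ((X → B) ⋊[wreathMul ρ B] A) := by
  have h : (SemidirectProduct.inl ((wreathMul ρ B a) n * n⁻¹) :
      (X → B) ⋊[wreathMul ρ B] A) =
      ⁅(SemidirectProduct.inr a : (X → B) ⋊[wreathMul ρ B] A), SemidirectProduct.inl n⁆ := by
    simp only [commutatorElement_def, ← map_inv]
    rw [← SemidirectProduct.inl_aut, ← map_mul]
  rw [h, commutator_def]
  exact Subgroup.commutator_mem_commutator (Subgroup.mem_top _) (Subgroup.mem_top _)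

/-- for `W = A ≀_X B` with `A` transitive on the finite set `X` and `B`
abelian, an element `(a; (h_x))` of `W` lies in `W'` iff `a ∈ A'` and `∏_x h_x = 1`. -/
theorem mem_commutator_wreath_iff {A X B : Type*} [Group A] [CommGroup B] [Fintype X]
    (ρ : A →* Equiv.Perm X) (htrans : ∀ x y : X, ∃ a : A, ρ a x = y)
    (w : (X → B) ⋊[wreathMul ρ B] A) :
    w ∈ commutator ((X → B) ⋊[wreathMul ρ B] A) ↔
      w.right ∈ commutator A ∧ ∏ x : X, w.left x = 1 := by
  classical
  constructor
  · intro hw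
    refine ⟨mem_comm_map SemidirectProduct.rightHom hw, ?_⟩
    have h := mem_comm_map (prodHom ρ) hw
    have hB : commutator B ≤ ⊥ := by
      rw [commutator_def]
      rw [Subgroup.commutator_le]
      intro g _ h _
      simp [commutatorElement_def, mul_comm]
    simpa [prodHom] using hB h
  · rintro ⟨ha, hf⟩
    have hwdecomp : w = SemidirectProduct.inl w.left * SemidirectProduct.inr w.right :=
      (SemidirectProduct.inl_left_mul_inr_right w).symm
    rw [hwdecomp]
    refine Subgroup.mul_mem _ ?_ (mem_comm_map (SemidirectProduct.inr) ha)
    -- now show `inl w.left ∈ W'` using `∏ w.left = 1`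
    rcases isEmpty_or_nonempty X with hX | hX
    · have : w.left = 1 := funext fun x => isEmptyElim x
      rw [this, map_one]
      exact Subgroup.one_mem _
    · obtain ⟨x₀⟩ := hX
      set f := w.left with hfdef
      have key : f = ∏ x ∈ Finset.univ.erase x₀,
          (Pi.mulSingle x (f x) * (Pi.mulSingle x₀ (f x))⁻¹) := by
        funext y
        rw [Finset.prod_apply]
        simp only [Pi.mul_apply, Pi.inv_apply, Pi.mulSingle_apply]
        rcases eq_or_ne y x₀ with rfl | hy
        · rw [Finset.prod_congr rfl (g := fun x => (f x)⁻¹)]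
          · rw [Finset.prod_inv_distrib]
            have h1 := hf
            rw [← Finset.prod_erase_mul Finset.univ f (Finset.mem_univ y)] at h1
            have h2 : ∏ x ∈ Finset.univ.erase y, f x = (f y)⁻¹ :=
              eq_inv_of_mul_eq_one_left h1
            rw [h2, inv_inv]
          · intro x hx
            rw [if_neg (Ne.symm (Finset.ne_of_mem_erase hx)), if_pos rfl, one_mul]
        · rw [Finset.prod_congr rfl
            (g := fun x => if y = x then f x else 1)]
          · rw [Finset.prod_ite_eq, if_pos (Finset.mem_erase.2 ⟨hy, Finset.mem_univ y⟩)]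
          · intro x hx
            rw [if_neg hy, inv_one, mul_one]
      rw [key]
      refine Finset.prod_induction _
        (fun n => (SemidirectProduct.inl n : (X → B) ⋊[wreathMul ρ B] A) ∈
          commutator ((X → B) ⋊[wreathMul ρ B] A))
        (fun a b ha hb => by
          show SemidirectProduct.inl (a * b) ∈ _
          rw [map_mul]; exact Subgroup.mul_mem _ ha hb)
        (by
          show SemidirectProduct.inl (1 : X → B) ∈ _
          rw [map_one]; exact Subgroup.one_mem _) fun x hx => ?_
      obtain ⟨a, haeq⟩ := htrans x₀ x
      have hsingle : (wreathMul ρ B a) (Pi.mulSingle x₀ (f x)) = Pi.mulSingle x (f x) := by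
        funext z
        rw [wreathMul_apply]
        simp only [Pi.mulSingle_apply]
        congr 1
        rw [eq_iff_iff, Equiv.symm_apply_eq, haeq]
      have := aut_mem_comm ρ a (Pi.mulSingle x₀ (f x))
      rwa [hsingle] at this
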